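/- Let c₃ > 0 and c₄ = 1/c₃, and let w : ℝ² → ℝ be differentiable with ∂w/∂x(x,y) = w(x,y) − c₄·e^{y−x} and ∂w/∂y(x,y) = w(x,y) − c₃·e^{x−y} for all (x,y) ∈ ℝ². Then there exists a constant η ∈ ℝ such that w(x,y) = cosh(y − x − log c₃) + η·e^{x+y} for all (x,y) ∈ ℝ². -/

import Mathlib

/-- Solving the linear first-order system `∂w/∂x = w − c₄ e^{y−x}`, `∂w/∂y = w − c₃ e^{x−y}`
with `c₄ = 1/c₃`: `w(x,y) = cosh(y − x − log c₃) + η e^{x+y}` for some constant `η`. -/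
theorem linear_system_cosh_pos (c₃ c₄ : ℝ) (hc₃ : 0 < c₃) (hc₄ : c₄ = 1 / c₃)
    (w : ℝ × ℝ → ℝ) (hdiff : Differentiable ℝ w)
    (hx : ∀ x y : ℝ, deriv (fun t => w (t, y)) x = w (x, y) - c₄ * Real.exp (y - x))
    (hy : ∀ x y : ℝ, deriv (fun s => w (x, s)) y = w (x, y) - c₃ * Real.exp (x - y)) :
    ∃ η : ℝ, ∀ x y : ℝ,
      w (x, y) = Real.cosh (y - x - Real.log c₃) + η * Real.exp (x + y) := by
  set L := Real.log c₃ with hL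
  set v : ℝ × ℝ → ℝ := fun p => (w p - Real.cosh (p.2 - p.1 - L)) * Real.exp (-(p.1 + p.2))
    with hv
  have hvdiff : Differentiable ℝ v := by
    apply Differentiable.mul
    · exact hdiff.sub (((differentiable_snd.sub differentiable_fst).sub_const L).cosh)
    · exact ((differentiable_fst.add differentiable_snd).neg).exp
  -- partial derivative facts for w
  have hwx : ∀ x y : ℝ, HasDerivAt (fun t => w (t, y)) (w (x, y) - c₄ * Real.exp (y - x)) x := by
    intro x y
    have h := (hdiff (x, y)).hasFDerivAt.comp_hasDerivAt x
      ((hasDerivAt_id x).prodMk (hasDerivAt_const x y))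
    have hd : deriv (fun t => w (t, y)) x = fderiv ℝ w (x, y) (1, 0) := h.deriv
    rw [hx x y] at hd
    rw [← hd] at h
    exact h
  have hwy : ∀ x y : ℝ, HasDerivAt (fun s => w (x, s)) (w (x, y) - c₃ * Real.exp (x - y)) y := by
    intro x y
    have h := (hdiff (x, y)).hasFDerivAt.comp_hasDerivAt y
      ((hasDerivAt_const y x).prodMk (hasDerivAt_id y))
    have hd : deriv (fun s => w (x, s)) y = fderiv ℝ w (x, y) (0, 1) := h.deriv
    rw [hy x y] at hd
    rw [← hd] at h
    exact h
  have hexpθ : ∀ x y : ℝ, Real.exp (y - x - L) = c₄ * Real.exp (y - x) := by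
    intro x y
    rw [Real.exp_sub, hL, Real.exp_log hc₃, hc₄]
    ring
  -- v has vanishing partial derivatives
  have hvx : ∀ x y : ℝ, HasDerivAt (fun t => v (t, y)) 0 x := by
    intro x y
    have hcosh : HasDerivAt (fun t => Real.cosh (y - t - L))
        (Real.sinh (y - x - L) * (0 - 1 - 0)) x :=
      (((hasDerivAt_const x y).sub (hasDerivAt_id x)).sub (hasDerivAt_const x L)).cosh
    have hexp : HasDerivAt (fun t => Real.exp (-(t + y)))
        (Real.exp (-(x + y)) * (-(1 + 0))) x :=
      (((hasDerivAt_id x).add (hasDerivAt_const x y)).neg).exp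
    have h := ((hwx x y).sub hcosh).mul hexp
    have hval : (w (x, y) - c₄ * Real.exp (y - x) - Real.sinh (y - x - L) * (0 - 1 - 0)) *
        Real.exp (-(x + y)) + (w (x, y) - Real.cosh (y - x - L)) *
        (Real.exp (-(x + y)) * (-(1 + 0))) = 0 := by
      have h1 : Real.cosh (y - x - L) + Real.sinh (y - x - L) = Real.exp (y - x - L) :=
        Real.cosh_add_sinh _
      rw [hexpθ x y] at h1
      linear_combination Real.exp (-(x + y)) * h1
    simp only [Pi.sub_apply] at h
    rw [hval] at h
    exact h
  have hvy : ∀ x y : ℝ, HasDerivAt (fun s => v (x, s)) 0 y := by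
    intro x y
    have hcosh : HasDerivAt (fun s => Real.cosh (s - x - L))
        (Real.sinh (y - x - L) * (1 - 0 - 0)) y :=
      (((hasDerivAt_id y).sub (hasDerivAt_const y x)).sub (hasDerivAt_const y L)).cosh
    have hexp : HasDerivAt (fun s => Real.exp (-(x + s)))
        (Real.exp (-(x + y)) * (-(0 + 1))) y :=
      (((hasDerivAt_const y x).add (hasDerivAt_id y)).neg).exp
    have h := ((hwy x y).sub hcosh).mul hexp
    have hval : (w (x, y) - c₃ * Real.exp (x - y) - Real.sinh (y - x - L) * (1 - 0 - 0)) *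
        Real.exp (-(x + y)) + (w (x, y) - Real.cosh (y - x - L)) *
        (Real.exp (-(x + y)) * (-(0 + 1))) = 0 := by
      have h1 : Real.cosh (y - x - L) - Real.sinh (y - x - L) = Real.exp (-(y - x - L)) :=
        Real.cosh_sub_sinh _
      have h2 : Real.exp (-(y - x - L)) = c₃ * Real.exp (x - y) := by
        rw [show -(y - x - L) = (x - y) + L by ring, Real.exp_add, hL, Real.exp_log hc₃]
        ring
      rw [h2] at h1
      linear_combination Real.exp (-(x + y)) * h1
    simp only [Pi.sub_apply] at h
    rw [hval] at h
    exact h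
  -- fderiv of v is zero
  have key : ∀ p : ℝ × ℝ, fderiv ℝ v p = 0 := by
    intro ⟨x, y⟩
    have h10 : fderiv ℝ v (x, y) (1, 0) = 0 := by
      have h := (hvdiff (x, y)).hasFDerivAt.comp_hasDerivAt x
        ((hasDerivAt_id x).prodMk (hasDerivAt_const x y))
      exact h.unique (hvx x y)
    have h01 : fderiv ℝ v (x, y) (0, 1) = 0 := by
      have h := (hvdiff (x, y)).hasFDerivAt.comp_hasDerivAt y
        ((hasDerivAt_const y x).prodMk (hasDerivAt_id y))
      exact h.unique (hvy x y)
    apply ContinuousLinearMap.ext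
    rintro ⟨a, b⟩
    have hab : (a, b) = a • ((1 : ℝ), (0 : ℝ)) + b • ((0 : ℝ), (1 : ℝ)) := by simp
    rw [hab, map_add, map_smul, map_smul, h10, h01]
    simp
  have hconst := is_const_of_fderiv_eq_zero hvdiff key
  refine ⟨v (0, 0), fun x y => ?_⟩
  have hv0 := hconst (x, y) (0, 0)
  have hne : Real.exp (-(x + y)) ≠ 0 := Real.exp_ne_zero _
  have : (w (x, y) - Real.cosh (y - x - L)) * Real.exp (-(x + y)) = v (0, 0) := hv0
  have hexp : Real.exp (-(x + y)) * Real.exp (x + y) = 1 := by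
    rw [← Real.exp_add, show -(x + y) + (x + y) = 0 by ring, Real.exp_zero]
  linear_combination Real.exp (x + y) * this - (w (x, y) - Real.cosh (y - x - L)) * hexp
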